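/- In a party-list instance, the greedy sequential algorithm that in each of k rounds adds a candidate of the party p maximizing s_p/(w_p + 1) (where w_p is the current number of seats of p) returns a committee minimizing α_EJR among all size-k committees. -/

import Mathlib

/-- A committee `W` satisfies α-EJR: for every `ℓ ≥ 1` and every group `S` with
`|S| ≥ α·ℓ·n/k` and at least `ℓ` commonly approved candidates, some voter in `S`
approves at least `ℓ` committee members. -/
def satisfiesAlphaEJR {n : ℕ} {C : Type*} [Fintype C] [DecidableEq C]
    (A : Fin n → Finset C) (W : Finset C) (k : ℕ) (α : ℝ) : Prop :=
  ∀ ℓ : ℕ, 1 ≤ ℓ → ∀ S : Finset (Fin n),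
    α * ℓ * n / k ≤ (S.card : ℝ) →
    ℓ ≤ (Finset.univ.filter fun c => ∀ v ∈ S, c ∈ A v).card →
    ∃ v ∈ S, ℓ ≤ (A v ∩ W).card

namespace GreedyEJR
set_option linter.unusedSectionVars false

variable {n k : ℕ} {C : Type*} [Fintype C] [DecidableEq C]

lemma alpha_pos {A : Fin n → Finset C} {W : Finset C} {α : ℝ}
    (hn : 1 ≤ n) (hk : 1 ≤ k) (hsize : ∀ v : Fin n, k ≤ (A v).card)
    (h : satisfiesAlphaEJR A W k α) : 0 < α := by
  by_contra hα
  push_neg at hα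
  have hv0 : (0 : ℕ) < n := hn
  obtain ⟨c, -⟩ := Finset.card_pos.mp (lt_of_lt_of_le hk (hsize ⟨0, hv0⟩))
  obtain ⟨v, hv, -⟩ := h 1 le_rfl ∅
    (by
      simp only [Finset.card_empty, Nat.cast_zero]
      have hnum : α * ((1:ℕ):ℝ) * n ≤ 0 := by
        have hn0 : (0:ℝ) ≤ n := Nat.cast_nonneg n
        push_cast
        nlinarith [mul_nonneg (neg_nonneg.mpr hα) hn0]
      have hden : (0:ℝ) ≤ k := Nat.cast_nonneg k
      exact div_nonpos_iff.mpr (Or.inr ⟨hnum, hden⟩))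
    (by
      have : (Finset.univ.filter fun c : C => ∀ v ∈ (∅ : Finset (Fin n)), c ∈ A v)
          = Finset.univ := by
        apply Finset.filter_true_of_mem
        intro x _ v hv
        exact absurd hv (Finset.notMem_empty v)
      rw [this]
      have : 0 < Fintype.card C := Fintype.card_pos_iff.mpr ⟨c⟩
      simpa using Nat.succ_le_of_lt this)
  exact absurd hv (Finset.notMem_empty v)

lemma mem_big {A : Fin n → Finset C} {W : Finset C} (hn : 1 ≤ n) (hk : 1 ≤ k) :
    satisfiesAlphaEJR A W k ((k : ℝ) + 1) := by
  intro ℓ hℓ S h1 h2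
  exfalso
  have hS : (S.card : ℝ) ≤ n := by
    have := Finset.card_le_card (Finset.subset_univ S)
    simpa using (Nat.cast_le.mpr this : (S.card : ℝ) ≤ (Finset.univ : Finset (Fin n)).card)
  have hk0 : (0:ℝ) < k := by exact_mod_cast hk
  rw [div_le_iff₀ hk0] at h1
  have hℓ' : (1:ℝ) ≤ ℓ := by exact_mod_cast hℓ
  have hn' : (1:ℝ) ≤ n := by exact_mod_cast hn
  have h3 : ((k:ℝ)+1) * 1 * n ≤ ((k:ℝ)+1) * ℓ * n := by gcongr
  have h4 : (S.card : ℝ) * k ≤ (n:ℝ) * k := by gcongr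
  nlinarith [h1, h3, h4, hn', hk0]

lemma invariant {A : Fin n → Finset C}
    (hpl : ∀ v v' : Fin n, A v = A v' ∨ A v ∩ A v' = ∅)
    {Wseq : ℕ → Finset C} (h0 : Wseq 0 = ∅)
    (hstep : ∀ i < k, ∃ (c : C) (v : Fin n),
      c ∈ A v ∧ c ∉ Wseq i ∧
      (∀ u : Fin n,
        ((Finset.univ.filter fun w => A w = A u).card : ℝ) / (((A u ∩ Wseq i).card : ℝ) + 1) ≤
          ((Finset.univ.filter fun w => A w = A v).card : ℝ) / (((A v ∩ Wseq i).card : ℝ) + 1)) ∧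
      Wseq (i + 1) = insert c (Wseq i)) :
    ∀ i ≤ k, ∀ u v : Fin n, 1 ≤ (A v ∩ Wseq i).card →
      ((Finset.univ.filter fun w => A w = A u).card : ℝ) / (((A u ∩ Wseq i).card : ℝ) + 1) ≤
        ((Finset.univ.filter fun w => A w = A v).card : ℝ) / ((A v ∩ Wseq i).card : ℝ) := by
  intro i
  induction i with
  | zero =>
    intro _ u v hv
    rw [h0] at hv
    simp at hv
  | succ i ih =>
    intro hik u v hv1
    have hik' : i < k := Nat.lt_of_lt_of_le (Nat.lt_succ_self i) hik
    obtain ⟨c, v₀, hcv₀, hcW, hmax, hins⟩ := hstep i hik'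
    have hpart : ∀ x : Fin n, c ∈ A x → A x = A v₀ := by
      intro x hx
      rcases hpl x v₀ with h | h
      · exact h
      · exact absurd (Finset.mem_inter.mpr ⟨hx, hcv₀⟩) (by rw [h]; exact Finset.notMem_empty c)
    have hcardmem : ∀ x : Fin n, c ∈ A x →
        (A x ∩ Wseq (i+1)).card = (A x ∩ Wseq i).card + 1 := by
      intro x hx
      rw [hins]
      have heq : A x ∩ insert c (Wseq i) = insert c (A x ∩ Wseq i) := by
        ext d
        simp only [Finset.mem_inter, Finset.mem_insert]
        constructor
        · rintro ⟨hd, hd' | hd'⟩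
          · exact Or.inl hd'
          · exact Or.inr ⟨hd, hd'⟩
        · rintro (rfl | ⟨hd, hd'⟩)
          · exact ⟨hx, Or.inl rfl⟩
          · exact ⟨hd, Or.inr hd'⟩
      rw [heq, Finset.card_insert_of_notMem (fun hmem => hcW (Finset.mem_inter.mp hmem).2)]
    have hcardnot : ∀ x : Fin n, c ∉ A x →
        (A x ∩ Wseq (i+1)) = (A x ∩ Wseq i) := by
      intro x hx
      rw [hins]
      ext d
      simp only [Finset.mem_inter, Finset.mem_insert]
      constructor
      · rintro ⟨hd, rfl | hd'⟩
        · exact absurd hd hx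
        · exact ⟨hd, hd'⟩
      · rintro ⟨hd, hd'⟩
        exact ⟨hd, Or.inr hd'⟩
    have hmono : ∀ x : Fin n, (A x ∩ Wseq i).card ≤ (A x ∩ Wseq (i+1)).card := by
      intro x
      by_cases hx : c ∈ A x
      · rw [hcardmem x hx]; omega
      · rw [hcardnot x hx]
    by_cases hv : c ∈ A v
    · -- party of v got the new seat
      rw [hpart v hv]
      rw [hcardmem v₀ hcv₀]
      push_cast
      calc ((Finset.univ.filter fun w => A w = A u).card : ℝ) / (((A u ∩ Wseq (i+1)).card : ℝ) + 1)
          ≤ ((Finset.univ.filter fun w => A w = A u).card : ℝ) / (((A u ∩ Wseq i).card : ℝ) + 1) := by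
            refine div_le_div_of_nonneg_left (by positivity) (by positivity) ?_
            have h := hmono u
            have h' : ((A u ∩ Wseq i).card : ℝ) ≤ ((A u ∩ Wseq (i+1)).card : ℝ) := by
              exact_mod_cast h
            linarith
        _ ≤ ((Finset.univ.filter fun w => A w = A v₀).card : ℝ) / (((A v₀ ∩ Wseq i).card : ℝ) + 1) :=
            hmax u
    · -- v's seats unchanged
      rw [hcardnot v hv] at hv1 ⊢
      by_cases hu : c ∈ A u
      · rw [hcardmem u hu]
        push_cast
        calc ((Finset.univ.filter fun w => A w = A u).card : ℝ) / (((A u ∩ Wseq i).card : ℝ) + 1 + 1)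
            ≤ ((Finset.univ.filter fun w => A w = A u).card : ℝ) / (((A u ∩ Wseq i).card : ℝ) + 1) := by
              refine div_le_div_of_nonneg_left (by positivity) (by positivity) (by linarith)
          _ ≤ _ := ih hik'.le u v hv1
      · rw [hcardnot u hu]
        exact ih hik'.le u v hv1

lemma counting {A : Fin n → Finset C} {g W' : Finset C}
    (hpl : ∀ v v' : Fin n, A v = A v' ∨ A v ∩ A v' = ∅)
    (hg : ∀ c ∈ g, ∃ v, c ∈ A v) (hgcard : W'.card ≤ g.card)
    (hpt : ∀ u : Fin n, (A u ∩ g).card ≤ (A u ∩ W').card) :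
    ∀ u : Fin n, (A u ∩ W').card ≤ (A u ∩ g).card := by
  classical
  set P : Finset (Finset C) := Finset.univ.image A with hP
  have hdisj : ∀ B ∈ P, ∀ B' ∈ P, B ≠ B' → Disjoint B B' := by
    intro B hB B' hB' hne
    obtain ⟨v, -, rfl⟩ := Finset.mem_image.mp hB
    obtain ⟨v', -, rfl⟩ := Finset.mem_image.mp hB'
    rcases hpl v v' with h | h
    · exact absurd h hne
    · exact Finset.disjoint_iff_inter_eq_empty.mpr h
  have hsum : ∀ X : Finset C,
      (∑ B ∈ P, (B ∩ X).card) = (P.biUnion fun B => B ∩ X).card := by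
    intro X
    refine (Finset.card_biUnion ?_).symm
    intro B hB B' hB' hne
    exact Finset.disjoint_of_subset_left Finset.inter_subset_left
      (Finset.disjoint_of_subset_right Finset.inter_subset_left (hdisj B hB B' hB' hne))
  have hW'sum : (∑ B ∈ P, (B ∩ W').card) ≤ W'.card := by
    rw [hsum]
    exact Finset.card_le_card (Finset.biUnion_subset.mpr fun B _ => Finset.inter_subset_right)
  have hgsum : (∑ B ∈ P, (B ∩ g).card) = g.card := by
    rw [hsum]
    congr 1
    apply Finset.Subset.antisymm
    · exact Finset.biUnion_subset.mpr fun B _ => Finset.inter_subset_right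
    · intro d hd
      obtain ⟨v, hv⟩ := hg d hd
      exact Finset.mem_biUnion.mpr ⟨A v, Finset.mem_image.mpr ⟨v, Finset.mem_univ v, rfl⟩,
        Finset.mem_inter.mpr ⟨hv, hd⟩⟩
  have hterm : ∀ B ∈ P, (B ∩ g).card ≤ (B ∩ W').card := by
    intro B hB
    obtain ⟨v, -, rfl⟩ := Finset.mem_image.mp hB
    exact hpt v
  have hsums : (∑ B ∈ P, (B ∩ g).card) = (∑ B ∈ P, (B ∩ W').card) := by
    have h1 : (∑ B ∈ P, (B ∩ g).card) ≤ (∑ B ∈ P, (B ∩ W').card) :=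
      Finset.sum_le_sum hterm
    have h2 : (∑ B ∈ P, (B ∩ W').card) ≤ (∑ B ∈ P, (B ∩ g).card) := by
      rw [hgsum]
      exact le_trans hW'sum hgcard
    omega
  have hall := (Finset.sum_eq_sum_iff_of_le hterm).mp hsums
  intro u
  exact le_of_eq (hall (A u) (Finset.mem_image.mpr ⟨u, Finset.mem_univ u, rfl⟩)).symm

lemma no_violation {A : Fin n → Finset C} {W' : Finset C} {α : ℝ}
    (hα : satisfiesAlphaEJR A W' k α) (q : Fin n)
    (hle : (A q ∩ W').card + 1 ≤ (A q).card)
    (hquota : α * (((A q ∩ W').card : ℝ) + 1) * n / k ≤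
      ((Finset.univ.filter fun w => A w = A q).card : ℝ)) :
    False := by
  obtain ⟨v, hvS, hvℓ⟩ := hα ((A q ∩ W').card + 1) (by omega)
    (Finset.univ.filter fun w => A w = A q)
    (by push_cast; exact hquota)
    (by
      refine le_trans hle (Finset.card_le_card ?_)
      intro c hc
      refine Finset.mem_filter.mpr ⟨Finset.mem_univ c, ?_⟩
      intro v hv
      rw [(Finset.mem_filter.mp hv).2]
      exact hc)
  rw [(Finset.mem_filter.mp hvS).2] at hvℓ
  omega

end GreedyEJR

/-- In a party-list instance, any run of the greedy sequential algorithm (in each of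
k rounds add an unchosen candidate of a party maximizing s_p/(w_p+1), where w_p is
the party's current number of seats) returns a size-k committee minimizing the
infimum α-value for EJR among all size-k committees. -/
theorem greedy_minimizes_alphaEJR {n k : ℕ} {C : Type*} [Fintype C] [DecidableEq C]
    (A : Fin n → Finset C) (hn : 1 ≤ n) (hk : 1 ≤ k)
    (hpl : ∀ v v' : Fin n, A v = A v' ∨ A v ∩ A v' = ∅)
    (hsize : ∀ v : Fin n, k ≤ (A v).card)
    (Wseq : ℕ → Finset C) (h0 : Wseq 0 = ∅)
    (hstep : ∀ i < k, ∃ (c : C) (v : Fin n),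
      c ∈ A v ∧ c ∉ Wseq i ∧
      (∀ u : Fin n,
        ((Finset.univ.filter fun w => A w = A u).card : ℝ) / (((A u ∩ Wseq i).card : ℝ) + 1) ≤
          ((Finset.univ.filter fun w => A w = A v).card : ℝ) / (((A v ∩ Wseq i).card : ℝ) + 1)) ∧
      Wseq (i + 1) = insert c (Wseq i)) :
    (Wseq k).card = k ∧
      ∀ W' : Finset C, W'.card = k →
        sInf {α : ℝ | satisfiesAlphaEJR A (Wseq k) k α} ≤
          sInf {α : ℝ | satisfiesAlphaEJR A W' k α} := by
  have hcard : ∀ i ≤ k, (Wseq i).card = i ∧ ∀ c ∈ Wseq i, ∃ v, c ∈ A v := by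
    intro i
    induction i with
    | zero => intro _; simp [h0]
    | succ i ih =>
      intro hik
      have hik' : i < k := hik
      obtain ⟨c, v₀, hc1, hc2, -, hins⟩ := hstep i hik'
      obtain ⟨hci, hap⟩ := ih hik'.le
      refine ⟨by rw [hins, Finset.card_insert_of_notMem hc2, hci], ?_⟩
      intro d hd
      rw [hins, Finset.mem_insert] at hd
      rcases hd with rfl | hd
      · exact ⟨v₀, hc1⟩
      · exact hap d hd
  obtain ⟨hWk, happ⟩ := hcard k le_rfl
  refine ⟨hWk, ?_⟩
  intro W' hW'
  have hk0 : (0:ℝ) < k := by exact_mod_cast hk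
  apply csInf_le_csInf
  · exact ⟨0, fun α hα => (GreedyEJR.alpha_pos hn hk hsize hα).le⟩
  · exact ⟨(k:ℝ)+1, GreedyEJR.mem_big hn hk⟩
  · intro α hα
    have hαpos : 0 < α := GreedyEJR.alpha_pos hn hk hsize hα
    intro ℓ hℓ S h1 h2
    by_contra hno
    push_neg at hno
    -- hno : ∀ v ∈ S, (A v ∩ Wseq k).card < ℓ
    obtain ⟨p, hpS, -⟩ := hα ℓ hℓ S h1 h2
    -- all members of S are in p's party
    obtain ⟨d, hd⟩ := Finset.card_pos.mp (lt_of_lt_of_le hℓ h2)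
    have hdall : ∀ v ∈ S, d ∈ A v := (Finset.mem_filter.mp hd).2
    have hparty : ∀ v ∈ S, A v = A p := by
      intro v hv
      rcases hpl v p with h | h
      · exact h
      · exact absurd (Finset.mem_inter.mpr ⟨hdall v hv, hdall p hpS⟩)
          (by rw [h]; exact Finset.notMem_empty d)
    have hgp : (A p ∩ Wseq k).card < ℓ := hno p hpS
    have hSle : (S.card : ℝ) ≤ ((Finset.univ.filter fun w => A w = A p).card : ℝ) := by
      have : S ⊆ Finset.univ.filter fun w => A w = A p := by
        intro v hv
        exact Finset.mem_filter.mpr ⟨Finset.mem_univ v, hparty v hv⟩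
      exact_mod_cast Finset.card_le_card this
    have hℓAp : ℓ ≤ (A p).card := by
      refine le_trans h2 (Finset.card_le_card ?_)
      intro c hc
      exact (Finset.mem_filter.mp hc).2 p hpS
    -- α·ℓ·n/k ≤ s_p
    have hstarℓ : α * (ℓ:ℝ) * n / k ≤ ((Finset.univ.filter fun w => A w = A p).card : ℝ) :=
      le_trans h1 hSle
    by_cases hcase : ∃ u : Fin n, (A u ∩ W').card < (A u ∩ Wseq k).card
    · -- some party q has strictly fewer seats in W' than in greedy
      obtain ⟨q, hq⟩ := hcase
      have hq1 : (A q ∩ W').card + 1 ≤ (A q ∩ Wseq k).card := hq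
      have hgq1 : 1 ≤ (A q ∩ Wseq k).card := by omega
      have hgqk : (A q ∩ Wseq k).card ≤ k := by
        exact le_trans (Finset.card_le_card Finset.inter_subset_right) (le_of_eq hWk)
      have hle : (A q ∩ W').card + 1 ≤ (A q).card := le_trans (le_trans hq1 hgqk) (hsize q)
      refine GreedyEJR.no_violation hα q hle ?_
      -- chain of quotient inequalities
      set sp : ℝ := ((Finset.univ.filter fun w => A w = A p).card : ℝ) with hsp
      set sq : ℝ := ((Finset.univ.filter fun w => A w = A q).card : ℝ) with hsq
      set wgp : ℝ := ((A p ∩ Wseq k).card : ℝ) with hwgp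
      set wgq : ℝ := ((A q ∩ Wseq k).card : ℝ) with hwgq
      set wq' : ℝ := ((A q ∩ W').card : ℝ) with hwq'
      have hwgq0 : (1:ℝ) ≤ wgq := by rw [hwgq]; exact_mod_cast hgq1
      have hwgp0 : (0:ℝ) ≤ wgp := Nat.cast_nonneg _
      have hinv := GreedyEJR.invariant hpl h0 hstep k le_rfl p q hgq1
      -- hinv : sp / (wgp + 1) ≤ sq / wgq
      have hstar : α * (wgp + 1) * n / k ≤ sp := by
        refine le_trans ?_ hstarℓ
        have hwℓ : wgp + 1 ≤ (ℓ:ℝ) := by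
          have h' : (A p ∩ Wseq k).card + 1 ≤ ℓ := hgp
          rw [hwgp]
          exact_mod_cast h'
        gcongr
      have hquot1 : α * n / k ≤ sp / (wgp + 1) := by
        rw [le_div_iff₀ (by positivity)]
        calc α * n / k * (wgp + 1) = α * (wgp + 1) * n / k := by ring
          _ ≤ sp := hstar
      have hquot2 : α * n / k ≤ sq / wgq := le_trans hquot1 hinv
      have hsqge : α * n / k * wgq ≤ sq := by
        have := mul_le_mul_of_nonneg_right hquot2 (le_trans zero_le_one hwgq0)
        rwa [div_mul_cancel₀ sq (by linarith : wgq ≠ 0)] at this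
      have hwq'wgq : wq' + 1 ≤ wgq := by
        rw [hwq', hwgq]
        exact_mod_cast hq1
      calc α * (wq' + 1) * n / k = α * n / k * (wq' + 1) := by ring
        _ ≤ α * n / k * wgq := by gcongr
        _ ≤ sq := hsqge
    · -- W' gives every party at least as many seats as greedy
      push_neg at hcase
      have hcnt := GreedyEJR.counting hpl happ (by rw [hW', hWk]) hcase p
      -- hcnt : (A p ∩ W').card ≤ (A p ∩ Wseq k).card
      have hle : (A p ∩ W').card + 1 ≤ (A p).card := by omega
      refine GreedyEJR.no_violation hα p hle ?_
      refine le_trans ?_ hstarℓ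
      have : ((A p ∩ W').card : ℝ) + 1 ≤ (ℓ:ℝ) := by
        have : (A p ∩ W').card + 1 ≤ ℓ := by omega
        exact_mod_cast this
      gcongr
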